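/- For every plane binary tree T with n+2 leaves (n > 0), the last branching vertices of T are in bijection with the active bonds of the TASEP configuration R(T), where an active bond is either: position 1 if t_1 = ∘, position n (as right boundary) if t_n = •, or an internal pair (k,k+1) with t_k = • and t_{k+1} = ∘. -/

import Mathlib

/-- Plane binary trees: every internal vertex has exactly two ordered children. -/
inductive PTree where
  | leaf : PTree
  | node : PTree → PTree → PTree
  deriving DecidableEq

namespace PTree

/-- number of leaves (endpoints) -/
def numLeaves : PTree → ℕ
  | leaf => 1
  | node l r => numLeaves l + numLeaves r

/-- directions of the leaves of a subtree which is itself a `b`-child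
(`true` = left child, `false` = right child), in left-to-right order. -/
def dirsAux : PTree → Bool → List Bool
  | leaf, b => [b]
  | node l r, _ => dirsAux l true ++ dirsAux r false

/-- the left/right-child directions of all leaves of a tree, left to right
(`true` = left child, `false` = right child). -/
def dirs : PTree → List Bool
  | leaf => []
  | node l r => dirsAux l true ++ dirsAux r false

/-- The reduction map `R`: the directions of the 2nd through (n+1)-th leaves;
`true` = • (occupied site, left child), `false` = ∘ (empty site, right child). -/
def red (T : PTree) : List Bool := ((dirs T).drop 1).dropLast

/-- number of internal vertices on the path from the leftmost leaf to the root
(root included). -/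
def lCount : PTree → ℕ
  | leaf => 0
  | node l _ => lCount l + 1

/-- number of internal vertices on the path from the rightmost leaf to the root
(root included). -/
def rCount : PTree → ℕ
  | leaf => 0
  | node _ r => rCount r + 1

/-- number of last branching vertices (internal vertices whose two children are leaves). -/
def lbCount : PTree → ℕ
  | leaf => 0
  | node leaf leaf => 1
  | node l r => lbCount l + lbCount r

end PTree

/-- Marked plane binary trees: a plane binary tree with exactly one of its
last branching vertices marked (the constructor `mark` is the marked vertex,
a vertex with two leaf children). -/
inductive MTree where
  | mark : MTree
  | nodeL : MTree → PTree → MTree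
  | nodeR : PTree → MTree → MTree
  deriving DecidableEq

namespace MTree

/-- forgetful map to plane binary trees -/
def forget : MTree → PTree
  | mark => .node .leaf .leaf
  | nodeL l r => .node (forget l) r
  | nodeR l r => .node l (forget r)

/-- collapse the marked vertex (with its two leaf children) to a single leaf. -/
def collapseT : MTree → PTree
  | mark => .leaf
  | nodeL l r => .node (collapseT l) r
  | nodeR l r => .node l (collapseT r)

/-- index (left to right, starting from 0) of the leaf of `collapseT` obtained
by collapsing the marked vertex. -/
def markIdx : MTree → ℕ
  | mark => 0
  | nodeL l _ => markIdx l
  | nodeR l r => l.numLeaves + markIdx r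

end MTree

/-- replace the `i`-th leaf of a tree by a marked last branching vertex. -/
def expand : PTree → ℕ → MTree
  | .leaf, _ => .mark
  | .node l r, i =>
      if i < l.numLeaves then .nodeL (expand l i) r
      else .nodeR l (expand r (i - l.numLeaves))

/-- index of the next right-child (`false`) leaf strictly after position `i`;
if there is none, the index of the rightmost left-child (`true`) leaf. -/
def nextFalseIdx (w : List Bool) (i : ℕ) : ℕ :=
  if (w.drop (i+1)).findIdx (fun b => !b) < (w.drop (i+1)).length
  then i + 1 + (w.drop (i+1)).findIdx (fun b => !b)
  else w.length - 1 - (w.reverse.findIdx (fun b => b))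

/-- index of the closest left-child (`true`) leaf strictly before position `i`;
if there is none, the index of the leftmost right-child (`false`) leaf. -/
def prevTrueIdx (w : List Bool) (i : ℕ) : ℕ :=
  if ((w.take i).reverse).findIdx (fun b => b) < i
  then i - 1 - ((w.take i).reverse).findIdx (fun b => b)
  else w.findIdx (fun b => !b)

/-- position of the leaf where the removed segment is re-glued by `π`. -/
def target (w : List Bool) (i : ℕ) : ℕ :=
  if w.getD i true then prevTrueIdx w i else nextFalseIdx w i

/-- The map `π` on marked trees: remove the segment joining the marked vertex to
its left (resp. right) leaf when the marked vertex is a right (resp. left) child,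
and glue it to the next right- (resp. left-) child leaf to the right (resp. left),
with the boundary rule when no such leaf exists; the new vertex is marked. -/
def piM (M : MTree) : MTree :=
  expand M.collapseT (target M.collapseT.dirs M.markIdx)

open Classical in
/-- Transition rates of the `n`-site open-boundary TASEP, on configurations
encoded as lists of booleans (`true` = •, `false` = ∘). -/
noncomputable def rate (α β : ℝ) (C C' : List Bool) : ℝ :=
  if ∃ A, C = false :: A ∧ C' = true :: A then α
  else if ∃ A, C = A ++ [true] ∧ C' = A ++ [false] then β
  else if ∃ A A', C = A ++ true :: false :: A' ∧ C' = A ++ false :: true :: A' then 1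
  else 0

/-- number of active bonds of a configuration: injection at site 1 if empty,
extraction at site n if occupied, and hops across •∘ pairs. -/
def activeCount (C : List Bool) : ℕ :=
  (if C.head? = some false then 1 else 0) +
  ((C.zip C.tail).count (true, false)) +
  (if C.getLast? = some true then 1 else 0)

/-- the weight `μ(T) = α^{-l(T)} β^{-r(T)}` of a plane binary tree. -/
noncomputable def mu (α β : ℝ) (T : PTree) : ℝ :=
  α ^ (-(T.lCount : ℤ)) * β ^ (-(T.rCount : ℤ))

/-- number of internal vertices on the path from the leftmost leaf to the root,
excluding the marked vertex. -/
def lCountM : MTree → ℕ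
  | .mark => 0
  | .nodeL l _ => lCountM l + 1
  | .nodeR l _ => l.lCount + 1

/-- number of internal vertices on the path from the rightmost leaf to the root,
excluding the marked vertex. -/
def rCountM : MTree → ℕ
  | .mark => 0
  | .nodeR _ r => rCountM r + 1
  | .nodeL _ r => r.rCount + 1

/-- the weight `μ̂` of a marked tree, excluding the marked vertex from the counts. -/
noncomputable def muHat (α β : ℝ) (M : MTree) : ℝ :=
  α ^ (-(lCountM M : ℤ)) * β ^ (-(rCountM M : ℤ))

section Aux

/-- number of adjacent (true,false) pairs -/
def dcount : List Bool → ℕ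
  | a :: b :: t => dcount (b :: t) + (if a && !b then 1 else 0)
  | _ => 0

lemma count_zip_eq_dcount (C : List Bool) :
    (C.zip C.tail).count (true, false) = dcount C := by
  match C with
  | [] => simp [dcount]
  | [a] => simp [dcount]
  | a :: b :: t =>
      have ih := count_zip_eq_dcount (b :: t)
      simp only [List.tail_cons, List.zip_cons_cons, List.count_cons, dcount] at *
      rw [ih]
      congr 1
      rcases a <;> rcases b <;> simp

lemma dcount_append_cons : ∀ (u : List Bool) (a : Bool) (v : List Bool),
    dcount (u ++ a :: v) = dcount (u ++ [a]) + dcount (a :: v)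
  | [], a, v => by simp [dcount]
  | [x], a, v => by simp [dcount]; ring
  | x :: y :: u, a, v => by
      have ih := dcount_append_cons (y :: u) a v
      simp only [List.cons_append] at ih ⊢
      simp only [dcount]
      omega

def hdD : PTree → Bool → Bool
  | .leaf, b => b
  | _, _ => true

def lstD : PTree → Bool → Bool
  | .leaf, b => b
  | _, _ => false

lemma dirsAux_ne_nil (t : PTree) (b : Bool) : t.dirsAux b ≠ [] := by
  cases t with
  | leaf => simp [PTree.dirsAux]
  | node l r => simp [PTree.dirsAux, dirsAux_ne_nil l true]

lemma length_dirsAux (t : PTree) (b : Bool) : (t.dirsAux b).length = t.numLeaves := by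
  cases t with
  | leaf => simp [PTree.dirsAux, PTree.numLeaves]
  | node l r =>
      simp [PTree.dirsAux, PTree.numLeaves, length_dirsAux l true, length_dirsAux r false]

lemma head?_dirsAux (t : PTree) (b : Bool) : (t.dirsAux b).head? = some (hdD t b) := by
  cases t with
  | leaf => simp [PTree.dirsAux, hdD]
  | node l r =>
      rw [PTree.dirsAux, List.head?_append_of_ne_nil _ (dirsAux_ne_nil l true)]
      rw [head?_dirsAux l true]
      cases l <;> simp [hdD]

lemma getLast?_dirsAux (t : PTree) (b : Bool) : (t.dirsAux b).getLast? = some (lstD t b) := by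
  cases t with
  | leaf => simp [PTree.dirsAux, lstD]
  | node l r =>
      rw [PTree.dirsAux, List.getLast?_append_of_ne_nil _ (dirsAux_ne_nil r false)]
      rw [getLast?_dirsAux r false]
      cases r <;> simp [lstD]

lemma dcount_append (U V : List Bool) (hU : U ≠ []) (hV : V ≠ []) (c a : Bool)
    (hc : U.getLast? = some c) (ha : V.head? = some a) :
    dcount (U ++ V) = dcount U + dcount V + (if c && !a then 1 else 0) := by
  obtain ⟨a2, v2, rfl⟩ := List.exists_cons_of_ne_nil hV
  simp only [List.head?_cons, Option.some_inj] at ha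
  subst ha
  obtain ⟨u, hu⟩ : ∃ u, U = u ++ [c] := by
    refine ⟨U.dropLast, ?_⟩
    rw [List.getLast?_eq_getLast hU, Option.some_inj] at hc
    conv_lhs => rw [← List.dropLast_append_getLast hU, hc]
  subst hu
  rw [dcount_append_cons (u ++ [c]) a2 v2]
  have h1 : u ++ [c] ++ [a2] = u ++ c :: [a2] := by simp
  rw [h1, dcount_append_cons u c [a2]]
  have h2 : dcount [c, a2] = if c && !a2 then 1 else 0 := by
    rcases a2 <;> rcases c <;> simp [dcount]
  rw [h2]
  ring

lemma dcount_dirsAux (t : PTree) (b : Bool) : dcount (t.dirsAux b) = t.lbCount := by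
  cases t with
  | leaf => simp [PTree.dirsAux, PTree.lbCount, dcount]
  | node l r =>
      rw [PTree.dirsAux,
        dcount_append _ _ (dirsAux_ne_nil l true) (dirsAux_ne_nil r false)
          (lstD l true) (hdD r false) (getLast?_dirsAux l true) (head?_dirsAux r false),
        dcount_dirsAux l true, dcount_dirsAux r false]
      cases l <;> cases r <;> simp [PTree.lbCount, lstD, hdD]

end Aux

/-- for `n > 0`, the last branching vertices of a tree `T ∈ T_n`
are in bijection with the active bonds of the configuration `R(T)`. -/
theorem lastBranch_card_eq_activeBonds (n : ℕ) (hn : 0 < n) (T : PTree)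
    (hT : T.numLeaves = n + 2) : T.lbCount = activeCount T.red := by
  cases T with
  | leaf => simp [PTree.numLeaves] at hT
  | node l r =>
    set D : List Bool := (PTree.node l r).dirs with hD
    have hDaux : D = (PTree.node l r).dirsAux true := by
      simp [hD, PTree.dirs, PTree.dirsAux]
    have hlen : D.length = n + 2 := by rw [hDaux, length_dirsAux, hT]
    have hhead : D.head? = some true := by rw [hDaux, head?_dirsAux]; rfl
    have hlast : D.getLast? = some false := by rw [hDaux, getLast?_dirsAux]; rfl
    have hdc : dcount D = (PTree.node l r).lbCount := by rw [hDaux, dcount_dirsAux]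
    set w : List Bool := (PTree.node l r).red with hw
    have hDne : D ≠ [] := by
      intro h; rw [h] at hlen; simp at hlen
    obtain ⟨d, t, hDt⟩ := List.exists_cons_of_ne_nil hDne
    have hd : d = true := by rw [hDt] at hhead; simpa using hhead
    subst hd
    have htne : t ≠ [] := by
      intro h; rw [hDt, h] at hlen
      simp only [List.length_cons, List.length_nil] at hlen; omega
    have hlast' : t.getLast? = some false := by
      rw [hDt, List.getLast?_cons] at hlast
      cases h : t.getLast? with
      | none => rw [h] at hlast; simp at hlast
      | some x => rw [h] at hlast; simpa using hlast
    have hwt : t = w ++ [false] := by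
      have hwd : w = t.dropLast := by
        rw [hw]; unfold PTree.red; rw [← hD, hDt]; simp
      rw [hwd]
      conv_lhs => rw [← List.dropLast_append_getLast htne]
      rw [List.getLast?_eq_getLast htne, Option.some_inj] at hlast'
      rw [hlast']
    have hwlen : w.length = n := by
      have h3 := hlen
      rw [hDt, hwt] at h3
      simp only [List.length_cons, List.length_append, List.length_nil] at h3; omega
    have hwne : w ≠ [] := by
      intro h; rw [h] at hwlen; simp at hwlen; omega
    rw [← hdc]
    obtain ⟨a, v, hav⟩ := List.exists_cons_of_ne_nil hwne
    obtain ⟨u, c, huc⟩ : ∃ u c, w = u ++ [c] := by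
      refine ⟨w.dropLast, w.getLast hwne, ?_⟩
      rw [List.dropLast_append_getLast hwne]
    have hwhead : w.head? = some a := by rw [hav]; rfl
    have hwlast : w.getLast? = some c := by
      rw [huc, List.getLast?_append_of_ne_nil _ (by simp)]; simp
    have key : dcount D = dcount w + (if a = false then 1 else 0) + (if c = true then 1 else 0) := by
      rw [hDt, hwt]
      have h1 : (true : Bool) :: (w ++ [false]) = [true] ++ (w ++ [false]) := by simp
      rw [h1, dcount_append [true] (w ++ [false]) (by simp) (by simp) true a rfl
        (by rw [List.head?_append_of_ne_nil _ hwne, hwhead])]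
      rw [dcount_append w [false] hwne (by simp) c false hwlast rfl]
      have h4 : dcount [true] = 0 := by simp [dcount]
      have h5 : dcount [false] = 0 := by simp [dcount]
      rw [h4, h5]
      rcases a <;> rcases c <;> simp
    rw [key]
    unfold activeCount
    rw [count_zip_eq_dcount, hwhead, hwlast]
    rcases a <;> rcases c <;> simp <;> omega
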